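/- Let L be a lattice and let u = ⟨x, y, z⟩ be a triple of elements of L such that the sublattice of L generated by {x, y, z} is modular. Then u^{(2)} = u^{(1)}. -/
import Mathlib

universe u v

/-- The map `⟨x,y,z⟩ ↦ ⟨x∨(y∧z), y∨(x∧z), z∨(x∧y)⟩` on triples. -/
def tripleStep {L : Type u} [Lattice L] (u : L × L × L) : L × L × L :=
  (u.1 ⊔ (u.2.1 ⊓ u.2.2), u.2.1 ⊔ (u.1 ⊓ u.2.2), u.2.2 ⊔ (u.1 ⊓ u.2.1))

/-- A lattice is `h`-modular if `u^{(h+1)} = u^{(h)}` for every triple `u`. -/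
def IsHModular (L : Type u) [Lattice L] (h : ℕ) : Prop :=
  ∀ u : L × L × L, tripleStep^[h + 1] u = tripleStep^[h] u

/-- if the sublattice of `L` generated by `{x, y, z}` is
modular, then `u^{(2)} = u^{(1)}` for the triple `u = ⟨x, y, z⟩`. -/
theorem tripleStep_eventually_constant_of_modular {L : Type u} [Lattice L]
    (x y z : L)
    (hmod : ∀ a b c : L, a ∈ latticeClosure {x, y, z} →
      b ∈ latticeClosure {x, y, z} → c ∈ latticeClosure {x, y, z} →
      a ≤ c → a ⊔ (b ⊓ c) = (a ⊔ b) ⊓ c) :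
    tripleStep^[2] (x, y, z) = tripleStep^[1] (x, y, z) := by
  set S := latticeClosure ({x, y, z} : Set L) with hS
  have hsub : ({x, y, z} : Set L) ⊆ S := subset_latticeClosure
  have hx : x ∈ S := hsub (by simp)
  have hy : y ∈ S := hsub (by simp)
  have hz : z ∈ S := hsub (by simp)
  have hsup : ∀ {a b : L}, a ∈ S → b ∈ S → a ⊔ b ∈ S :=
    fun ha hb => isSublattice_latticeClosure.1 ha hb
  have hinf : ∀ {a b : L}, a ∈ S → b ∈ S → a ⊓ b ∈ S :=
    fun ha hb => isSublattice_latticeClosure.2 ha hb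
  -- key: for elements a b c of S, (b ⊔ (a⊓c)) ⊓ (c ⊔ (a⊓b)) = (a⊓b) ⊔ (a⊓c) ⊔ (b⊓c)
  have key : ∀ a b c : L, a ∈ S → b ∈ S → c ∈ S →
      (b ⊔ (a ⊓ c)) ⊓ (c ⊔ (a ⊓ b)) = (a ⊓ c) ⊔ ((a ⊓ b) ⊔ (b ⊓ c)) := by
    intro a b c ha hb hc
    have h1 : (a ⊓ c) ⊔ (b ⊓ (c ⊔ (a ⊓ b))) = ((a ⊓ c) ⊔ b) ⊓ (c ⊔ (a ⊓ b)) :=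
      hmod (a ⊓ c) b (c ⊔ (a ⊓ b)) (hinf ha hc) hb (hsup hc (hinf ha hb))
        (le_sup_of_le_left inf_le_right)
    have h2 : (a ⊓ b) ⊔ (c ⊓ b) = ((a ⊓ b) ⊔ c) ⊓ b :=
      hmod (a ⊓ b) c b (hinf ha hb) hc hb inf_le_right
    rw [sup_comm b (a ⊓ c), ← h1]
    congr 1
    rw [inf_comm b (c ⊔ (a ⊓ b)), sup_comm c (a ⊓ b), ← h2, inf_comm c b]
  have habc : ∀ a b c : L, a ∈ S → b ∈ S → c ∈ S →
      (b ⊔ (a ⊓ c)) ⊓ (c ⊔ (a ⊓ b)) ≤ a ⊔ (b ⊓ c) := by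
    intro a b c ha hb hc
    rw [key a b c ha hb hc]
    exact sup_le (le_sup_of_le_left inf_le_left)
      (sup_le (le_sup_of_le_left inf_le_left) le_sup_right)
  show tripleStep (tripleStep (x, y, z)) = tripleStep (x, y, z)
  simp only [tripleStep, Prod.mk.injEq]
  refine ⟨?_, ?_, ?_⟩
  · exact sup_eq_left.mpr (habc x y z hx hy hz)
  · have := habc y x z hy hx hz
    rw [inf_comm y x] at this
    exact sup_eq_left.mpr this
  · apply sup_eq_left.mpr
    calc (x ⊔ (y ⊓ z)) ⊓ (y ⊔ (x ⊓ z)) = (x ⊔ (z ⊓ y)) ⊓ (y ⊔ (z ⊓ x)) := by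
          rw [inf_comm y z, inf_comm x z]
      _ ≤ z ⊔ (x ⊓ y) := habc z x y hz hx hy
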